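/- Uniqueness of the solution converging to the unstable limit: Let k > 0, c ∈ (-k, 0), α ∈ {-1, 1}, with θ₋(c) ∈ (0, π/4) satisfying sin(2θ₋(c)) = -c/k. If θ₁ ≤ θ₂ are two solutions of ρ·θ' = c + (k + α/ρ)·sin(2θ) on (ρ₀, ∞) both tending to θ₋(c) as ρ → ∞, then θ₁ = θ₂. -/

import Mathlib

open Real Set Filter

/-- Uniqueness of the solution converging to the unstable limit: two ordered
solutions of ρ·θ' = c + (k + α/ρ)·sin(2θ) on (ρ₀, ∞), both tending to
θ₋(c) ∈ (0, π/4) with sin(2θ₋(c)) = -c/k as ρ → ∞, coincide. -/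
theorem stmt_9 (k c α ρ₀ : ℝ) (hk : 0 < k) (hc₁ : -k < c) (hc₂ : c < 0)
    (hα : α = -1 ∨ α = 1) (hρ₀ : 0 < ρ₀)
    (θm : ℝ) (hθm : θm ∈ Ioo 0 (π / 4)) (hsin : Real.sin (2 * θm) = -c / k)
    (θ₁ θ₂ : ℝ → ℝ)
    (hsol₁ : ∀ ρ ∈ Ioi ρ₀, HasDerivAt θ₁ ((c + (k + α / ρ) * Real.sin (2 * θ₁ ρ)) / ρ) ρ)
    (hsol₂ : ∀ ρ ∈ Ioi ρ₀, HasDerivAt θ₂ ((c + (k + α / ρ) * Real.sin (2 * θ₂ ρ)) / ρ) ρ)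
    (hle : ∀ ρ ∈ Ioi ρ₀, θ₁ ρ ≤ θ₂ ρ)
    (hlim₁ : Tendsto θ₁ atTop (nhds θm))
    (hlim₂ : Tendsto θ₂ atTop (nhds θm)) :
    ∀ ρ ∈ Ioi ρ₀, θ₁ ρ = θ₂ ρ := by
  have hπ : (0:ℝ) < π / 4 := by positivity
  have hαabs : |α| = 1 := by rcases hα with h | h <;> simp [h]
  have hIoo : Ioo (-(π/4)) (π/4) ∈ nhds θm :=
    Ioo_mem_nhds (by linarith [hθm.1]) hθm.2
  obtain ⟨N₁, hN₁⟩ := eventually_atTop.1 (hlim₁.eventually_mem hIoo)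
  obtain ⟨N₂, hN₂⟩ := eventually_atTop.1 (hlim₂.eventually_mem hIoo)
  set R : ℝ := max (max N₁ N₂) (max (ρ₀ + 1) (2 / k)) with hR
  have hRρ₀ : ρ₀ < R := by
    have : ρ₀ + 1 ≤ R := le_trans (le_max_left _ _) (le_max_right _ _)
    linarith
  have hRk : 2 / k ≤ R := le_trans (le_max_right _ _) (le_max_right _ _)
  have hRpos : 0 < R := lt_trans hρ₀ hRρ₀
  -- basic facts for ρ ≥ R
  have hfacts : ∀ ρ, R ≤ ρ → 0 < ρ ∧ 0 ≤ k + α / ρ ∧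
      θ₁ ρ ∈ Ioo (-(π/4)) (π/4) ∧ θ₂ ρ ∈ Ioo (-(π/4)) (π/4) := by
    intro ρ hρ
    have h0 : 0 < ρ := lt_of_lt_of_le hRpos hρ
    have hk2 : 2 / k ≤ ρ := le_trans hRk hρ
    have h2 : (2:ℝ) ≤ k * ρ := by
      rw [div_le_iff₀ hk] at hk2; linarith [hk2]
    have hinv : 1 / ρ ≤ k / 2 := by
      rw [div_le_div_iff₀ h0 (by norm_num : (0:ℝ) < 2)]; linarith
    have hA : 0 ≤ k + α / ρ := by
      have : |α / ρ| ≤ k / 2 := by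
        rw [abs_div, hαabs, abs_of_pos h0]; exact hinv
      have := abs_le.1 this
      linarith [this.1, hk]
    refine ⟨h0, hA, hN₁ ρ (le_trans (le_trans (le_max_left _ _) (le_max_left _ _)) hρ),
      hN₂ ρ (le_trans (le_trans (le_max_right _ _) (le_max_left _ _)) hρ)⟩
  -- φ is monotone on Ici R
  have hmono : MonotoneOn (fun ρ => θ₂ ρ - θ₁ ρ) (Ici R) := by
    apply monotoneOn_of_deriv_nonneg (convex_Ici R)
    · intro x hx
      have hx' : ρ₀ < x := lt_of_lt_of_le hRρ₀ hx
      exact (((hsol₂ x hx').sub (hsol₁ x hx')).continuousAt).continuousWithinAt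
    · intro x hx
      rw [interior_Ici] at hx
      have hx' : ρ₀ < x := lt_of_lt_of_le hRρ₀ (le_of_lt hx)
      exact (((hsol₂ x hx').sub (hsol₁ x hx')).differentiableAt).differentiableWithinAt
    · intro x hx
      rw [interior_Ici] at hx
      have hx' : ρ₀ < x := lt_of_lt_of_le hRρ₀ (le_of_lt hx)
      have hd := ((hsol₂ x hx').sub (hsol₁ x hx')).deriv
      rw [show (fun ρ => θ₂ ρ - θ₁ ρ) = θ₂ - θ₁ from rfl, hd]
      obtain ⟨h0, hA, h1, h2⟩ := hfacts x (le_of_lt hx)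
      have hmem₁ : 2 * θ₁ x ∈ Icc (-(π/2)) (π/2) :=
        mem_Icc.mpr ⟨by linarith [h1.1], by linarith [h1.2]⟩
      have hmem₂ : 2 * θ₂ x ∈ Icc (-(π/2)) (π/2) :=
        mem_Icc.mpr ⟨by linarith [h2.1], by linarith [h2.2]⟩
      have hs : Real.sin (2 * θ₁ x) ≤ Real.sin (2 * θ₂ x) :=
        Real.strictMonoOn_sin.monotoneOn hmem₁ hmem₂ (by linarith [hle x hx'])
      have : (c + (k + α / x) * Real.sin (2 * θ₁ x)) / x
          ≤ (c + (k + α / x) * Real.sin (2 * θ₂ x)) / x := by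
        gcongr
      linarith
  -- φ = 0 on Ici R
  have hzero : ∀ ρ, R ≤ ρ → θ₁ ρ = θ₂ ρ := by
    intro ρ hρ
    have hρ' : ρ₀ < ρ := lt_of_lt_of_le hRρ₀ hρ
    have hφlim : Tendsto (fun x => θ₂ x - θ₁ x) atTop (nhds 0) := by
      simpa using hlim₂.sub hlim₁
    have hub : θ₂ ρ - θ₁ ρ ≤ 0 := by
      refine ge_of_tendsto hφlim ?_
      filter_upwards [eventually_ge_atTop ρ] with x hx
      exact hmono hρ (le_trans hρ hx) hx
    have hlb : 0 ≤ θ₂ ρ - θ₁ ρ := by linarith [hle ρ hρ']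
    linarith
  -- conclude on all of Ioi ρ₀ using backward ODE uniqueness
  intro ρ hρ
  rw [mem_Ioi] at hρ
  have hρpos : 0 < ρ := lt_trans hρ₀ hρ
  set b : ℝ := max ρ R with hb
  have hρb : ρ ≤ b := le_max_left _ _
  have heqb : θ₁ b = θ₂ b := hzero b (le_max_right _ _)
  set v : ℝ → ℝ → ℝ := fun t x => (c + (k + α / max t ρ) * Real.sin (2 * x)) / max t ρ with hv_def
  have hKpos : (0:ℝ) ≤ 2 * (k + 1/ρ) / ρ := by positivity
  set K : NNReal := ⟨2 * (k + 1/ρ) / ρ, hKpos⟩ with hK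
  have hv : ∀ t, LipschitzWith K (v t) := by
    intro t
    apply LipschitzWith.of_dist_le_mul
    intro x y
    have hm : ρ ≤ max t ρ := le_max_right _ _
    have hm0 : 0 < max t ρ := lt_of_lt_of_le hρpos hm
    have hdiff : v t x - v t y
        = (k + α / max t ρ) * (Real.sin (2*x) - Real.sin (2*y)) / max t ρ := by
      simp only [hv_def]
      field_simp
      ring
    have hsinlip : |Real.sin (2*x) - Real.sin (2*y)| ≤ 2 * |x - y| := by
      rw [Real.sin_sub_sin]
      have heq : (2*x - 2*y)/2 = x - y := by ring
      rw [heq]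
      calc |2 * Real.sin (x - y) * Real.cos ((2*x + 2*y)/2)|
          = 2 * (|Real.sin (x - y)| * |Real.cos ((2*x + 2*y)/2)|) := by
            rw [abs_mul, abs_mul]; norm_num [mul_assoc]
        _ ≤ 2 * (|x - y| * 1) := by
            have h1 : |Real.sin (x - y)| ≤ |x - y| := Real.abs_sin_le_abs
            have h2 : |Real.cos ((2*x + 2*y)/2)| ≤ 1 := Real.abs_cos_le_one _
            have h3 := mul_le_mul h1 h2 (abs_nonneg _) (abs_nonneg _)
            linarith
        _ = 2 * |x - y| := by ring
    have hAbd : |k + α / max t ρ| ≤ k + 1/ρ := by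
      have h1 : |α / max t ρ| ≤ 1/ρ := by
        rw [abs_div, hαabs, abs_of_pos hm0]
        exact one_div_le_one_div_of_le hρpos hm
      calc |k + α / max t ρ| ≤ |k| + |α / max t ρ| := abs_add_le _ _
        _ ≤ k + 1/ρ := by rw [abs_of_pos hk]; linarith
    rw [Real.dist_eq, Real.dist_eq, hdiff]
    rw [abs_div, abs_mul, abs_of_pos hm0]
    have hK' : (K : ℝ) = 2 * (k + 1/ρ) / ρ := rfl
    rw [hK']
    calc |k + α / max t ρ| * |Real.sin (2*x) - Real.sin (2*y)| / max t ρ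
        ≤ (k + 1/ρ) * (2 * |x - y|) / ρ := by
          apply div_le_div₀ (by positivity)
            (mul_le_mul hAbd hsinlip (abs_nonneg _) (by positivity)) hρpos hm
      _ = 2 * (k + 1/ρ) / ρ * |x - y| := by ring
  have hcont₁ : ContinuousOn θ₁ (Icc ρ b) := fun t ht =>
    ((hsol₁ t (lt_of_lt_of_le hρ ht.1)).continuousAt).continuousWithinAt
  have hcont₂ : ContinuousOn θ₂ (Icc ρ b) := fun t ht =>
    ((hsol₂ t (lt_of_lt_of_le hρ ht.1)).continuousAt).continuousWithinAt
  have hder₁ : ∀ t ∈ Ioc ρ b, HasDerivWithinAt θ₁ (v t (θ₁ t)) (Iic t) t := by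
    intro t ht
    have hmax : max t ρ = t := max_eq_left (le_of_lt ht.1)
    have := (hsol₁ t (lt_trans hρ ht.1)).hasDerivWithinAt (s := Iic t)
    simpa [hv_def, hmax] using this
  have hder₂ : ∀ t ∈ Ioc ρ b, HasDerivWithinAt θ₂ (v t (θ₂ t)) (Iic t) t := by
    intro t ht
    have hmax : max t ρ = t := max_eq_left (le_of_lt ht.1)
    have := (hsol₂ t (lt_trans hρ ht.1)).hasDerivWithinAt (s := Iic t)
    simpa [hv_def, hmax] using this
  have key := ODE_solution_unique_of_mem_Icc_left (s := fun _ => (univ : Set ℝ))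
    (v := v) (K := K) (fun t _ => (hv t).lipschitzOnWith)
    hcont₁ hder₁ (fun _ _ => trivial) hcont₂ hder₂ (fun _ _ => trivial) heqb
  exact key ⟨le_refl ρ, hρb⟩
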